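/- If α : (0,1) → ℝ is continuous, and Φ : (0,1) → Homeo(ℝ) is given by Φ(t) = T_{α(t)}, translation by α(t), then the map (y,t) ↦ (y + α(t), t) is a homeomorphism of ℝ × (0,1); moreover if g : ℝ → ℝ is a homeomorphism with g(y) = y for y ≤ 0 and α(t) → ∞ as t → 0⁺, then the map F(y,t) = (T_{α(t)} ∘ g ∘ T_{−α(t)}(y), t) for t > 0, F(y,0) = (y,0), extends to a continuous map on any set ℝ_{≤c} × [0,1) → ℝ × [0,1) and is the identity on ℝ_{≤c} × {0} in the limit, for any fixed c: specifically, for each compact K ⊆ ℝ, F(y,t) → (y,0) uniformly on K as t → 0⁺. -/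
import Mathlib


open Set Filter

/-- (1) For continuous `α`, `(y,t) ↦ (y + α t, t)` is a homeomorphism of `ℝ × (0,1)`.
(2) If `g : ℝ → ℝ` is a homeomorphism with `g y = y` for `y ≤ 0` and `α(t) → ∞` as
`t → 0⁺`, then the conjugated maps `y ↦ α t + g (y − α t)` converge to the identity
uniformly on every compact subset of `ℝ` as `t → 0⁺`; hence the assembled map `F`
extends continuously by the identity at `t = 0`. -/
theorem stmt18 (α : ℝ → ℝ) (hα : ContinuousOn α (Ioo 0 1))
    (g : ℝ ≃ₜ ℝ) (hg : ∀ y : ℝ, y ≤ 0 → g y = y)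
    (hαtop : Tendsto α (nhdsWithin 0 (Ioi 0)) atTop) :
    IsHomeomorph (fun p : ℝ × (Ioo (0 : ℝ) 1) =>
      ((p.1 + α p.2, p.2) : ℝ × (Ioo (0 : ℝ) 1))) ∧
    ∀ K : Set ℝ, IsCompact K →
      TendstoUniformlyOn (fun t : ℝ => fun y : ℝ => α t + g (y - α t)) id
        (nhdsWithin 0 (Ioi 0)) K := by
  have hc : Continuous fun q : Ioo (0 : ℝ) 1 => α q :=
    hα.comp_continuous continuous_subtype_val fun q => q.2
  constructor
  · exact Homeomorph.isHomeomorph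
      { toFun := fun p : ℝ × (Ioo (0 : ℝ) 1) => (p.1 + α p.2, p.2)
        invFun := fun p : ℝ × (Ioo (0 : ℝ) 1) => (p.1 - α p.2, p.2)
        left_inv := fun p => by simp
        right_inv := fun p => by simp
        continuous_toFun := by
          exact (continuous_fst.add (hc.comp continuous_snd)).prodMk continuous_snd
        continuous_invFun := by
          exact (continuous_fst.sub (hc.comp continuous_snd)).prodMk continuous_snd }
  · intro K hK
    obtain ⟨c, hc'⟩ := hK.bddAbove
    intro u hu
    filter_upwards [hαtop.eventually_ge_atTop c] with t ht y hy
    have : y - α t ≤ 0 := by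
      have := hc' hy
      linarith
    simp [hg _ this, refl_mem_uniformity hu]
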